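/- Second-order identifiability of the Weibull family (Theorem 3.3(c)): Let f(x|ν,λ) = (ν/λ)(x/λ)^{ν−1} exp(−(x/λ)^ν) for x > 0 (and 0 for x ≤ 0), with shape ν > 0 and scale λ > 0. Then the family {f(·|ν,λ) : ν > 0, λ > 0} is identifiable in the second order: for any k ≥ 1, any k distinct pairs (ν₁,λ₁),…,(ν_k,λ_k) ∈ (0,∞)², and any real coefficients α_j, β_j⁽¹⁾, β_j⁽²⁾, γ_j⁽¹¹⁾, γ_j⁽¹²⁾, γ_j⁽²²⁾ (1 ≤ j ≤ k), if Σ_{j=1}^k [α_j f + β_j⁽¹⁾ ∂f/∂ν + β_j⁽²⁾ ∂f/∂λ + γ_j⁽¹¹⁾ ∂²f/∂ν² + γ_j⁽¹²⁾ ∂²f/∂ν∂λ + γ_j⁽²²⁾ ∂²f/∂λ²] (x|ν_j,λ_j) = 0 for almost every x > 0, then all of these coefficients are zero. -/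

import Mathlib

open MeasureTheory Real Filter

noncomputable section

/-- The Weibull density with shape `ν` and scale `λ`:
`f(x|ν,λ) = (ν/λ)(x/λ)^{ν−1} exp(−(x/λ)^ν)` for `x > 0`, and `0` otherwise. -/
def weibull (ν lam x : ℝ) : ℝ :=
  if 0 < x then (ν / lam) * (x / lam) ^ (ν - 1) * Real.exp (-((x / lam) ^ ν)) else 0

/-- First partial derivative of a two-parameter family in its first parameter. -/
def pd₁ (f : ℝ → ℝ → ℝ → ℝ) (a b x : ℝ) : ℝ := deriv (fun t => f t b x) a

/-- First partial derivative in the second parameter. -/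
def pd₂ (f : ℝ → ℝ → ℝ → ℝ) (a b x : ℝ) : ℝ := deriv (fun s => f a s x) b

/-- Second partial derivative in the first parameter. -/
def pd₁₁ (f : ℝ → ℝ → ℝ → ℝ) (a b x : ℝ) : ℝ := deriv (fun t => pd₁ f t b x) a

/-- Mixed second partial derivative. -/
def pd₁₂ (f : ℝ → ℝ → ℝ → ℝ) (a b x : ℝ) : ℝ := deriv (fun s => pd₁ f a s x) b

/-- Second partial derivative in the second parameter. -/
def pd₂₂ (f : ℝ → ℝ → ℝ → ℝ) (a b x : ℝ) : ℝ := deriv (fun s => pd₂ f a s x) b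

/-- `log x - log l`, the log of `x/l`. -/
def Lg (l x : ℝ) : ℝ := Real.log x - Real.log l
/-- `(x/l)^ν` in exp/log form. -/
def Aa (ν l x : ℝ) : ℝ := Real.exp (ν * Lg l x)

lemma weibull_eq (ν l x : ℝ) (hx : 0 < x) (hl : 0 < l) :
    weibull ν l x = ν / x * Aa ν l x * Real.exp (-(Aa ν l x)) := by
  have hu : 0 < x / l := div_pos hx hl
  rw [weibull, if_pos hx, Real.rpow_def_of_pos hu, Real.rpow_def_of_pos hu,
    Real.log_div hx.ne' hl.ne']
  unfold Aa Lg
  have h1 : Real.exp ((Real.log x - Real.log l) * (ν - 1))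
      = Real.exp (ν * (Real.log x - Real.log l)) / (x / l) := by
    rw [eq_div_iff hu.ne', ← Real.exp_log hu, Real.log_div hx.ne' hl.ne', ← Real.exp_add]
    ring_nf
  rw [h1]
  have h2 : Real.exp ((Real.log x - Real.log l) * ν) = Real.exp (ν * (Real.log x - Real.log l)) := by
    ring_nf
  rw [h2]
  field_simp

def F1 (ν l x : ℝ) : ℝ :=
  Real.exp (-(Aa ν l x)) / x * (Aa ν l x + ν * Lg l x * (Aa ν l x - Aa ν l x ^ 2))
def F2 (ν l x : ℝ) : ℝ :=
  ν ^ 2 / (l * x) * (Aa ν l x ^ 2 - Aa ν l x) * Real.exp (-(Aa ν l x))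
def F11 (ν l x : ℝ) : ℝ :=
  Real.exp (-(Aa ν l x)) / x * ((2 * Aa ν l x - 2 * Aa ν l x ^ 2) * Lg l x
    + ν * (Aa ν l x - 3 * Aa ν l x ^ 2 + Aa ν l x ^ 3) * Lg l x ^ 2)
def F12 (ν l x : ℝ) : ℝ :=
  ν * Real.exp (-(Aa ν l x)) / (l * x) * (2 * Aa ν l x ^ 2 - 2 * Aa ν l x
    + ν * Lg l x * (3 * Aa ν l x ^ 2 - Aa ν l x - Aa ν l x ^ 3))
def F22 (ν l x : ℝ) : ℝ :=
  ν ^ 2 * Real.exp (-(Aa ν l x)) / (l ^ 2 * x) * (Aa ν l x - Aa ν l x ^ 2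
    + ν * (Aa ν l x ^ 3 - 3 * Aa ν l x ^ 2 + Aa ν l x))

/-- derivative of `t ↦ exp (t*L)` -/
lemma hA (L t : ℝ) : HasDerivAt (fun t => Real.exp (t * L)) (Real.exp (t * L) * L) t := by
  simpa using ((hasDerivAt_id t).mul_const L).exp

lemma pd1_eq (ν l x : ℝ) (hx : 0 < x) (hl : 0 < l) :
    pd₁ weibull ν l x = F1 ν l x := by
  unfold pd₁
  have hfe : (fun t => weibull t l x)
      = fun t => t / x * Real.exp (t * Lg l x) * Real.exp (-(Real.exp (t * Lg l x))) :=
    funext fun t => weibull_eq t l x hx hl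
  rw [hfe]
  set L := Lg l x with hL
  have h := (((hasDerivAt_id ν).div_const x).mul (hA L ν)).mul ((hA L ν).neg.exp)
  simp only [id_eq] at h
  erw [h.deriv]
  simp only [Pi.mul_apply, Pi.neg_apply, Pi.add_apply, Pi.sub_apply, Pi.pow_apply]
  show _ = F1 ν l x
  unfold F1 Aa
  rw [← hL]
  field_simp
  ring

lemma hAs (ν l x : ℝ) (hl : 0 < l) :
    HasDerivAt (fun s => Real.exp (ν * (Real.log x - Real.log s)))
      (Real.exp (ν * (Real.log x - Real.log l)) * (ν * -l⁻¹)) l := by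
  exact (((Real.hasDerivAt_log hl.ne').const_sub (Real.log x)).const_mul ν).exp

lemma ev_eq_nhds {l : ℝ} (hl : 0 < l) {f g : ℝ → ℝ} (h : ∀ s, 0 < s → f s = g s) :
    f =ᶠ[nhds l] g := by
  filter_upwards [eventually_gt_nhds hl] with s hs using h s hs

lemma pd2_eq (ν l x : ℝ) (hx : 0 < x) (hl : 0 < l) :
    pd₂ weibull ν l x = F2 ν l x := by
  unfold pd₂
  have hfe : (fun s => weibull ν s x)
      =ᶠ[nhds l] fun s => ν / x * Real.exp (ν * (Real.log x - Real.log s))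
        * Real.exp (-(Real.exp (ν * (Real.log x - Real.log s)))) :=
    ev_eq_nhds hl fun s hs => weibull_eq ν s x hx hs
  rw [hfe.deriv_eq]
  have h := (((hAs ν l x hl).const_mul (ν / x)).mul ((hAs ν l x hl).neg.exp))
  erw [h.deriv]
  simp only [Pi.mul_apply, Pi.neg_apply, Pi.add_apply, Pi.sub_apply, Pi.pow_apply]
  show _ = F2 ν l x
  unfold F2 Aa Lg
  field_simp
  ring

lemma pd11_eq (ν l x : ℝ) (hx : 0 < x) (hl : 0 < l) :
    pd₁₁ weibull ν l x = F11 ν l x := by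
  unfold pd₁₁
  have hfe : (fun t => pd₁ weibull t l x) = fun t => F1 t l x :=
    funext fun t => pd1_eq t l x hx hl
  rw [hfe]
  set L := Lg l x with hL
  have hfe2 : (fun t => F1 t l x)
      = fun t => Real.exp (-(Real.exp (t * L))) / x
        * (Real.exp (t * L) + t * L * (Real.exp (t * L) - Real.exp (t * L) ^ 2)) := by
    funext t; simp only [F1, Aa, hL]
  rw [hfe2]
  have hP := (hA L ν).add (((hasDerivAt_id ν).mul_const L).mul
    ((hA L ν).sub ((hA L ν).pow 2)))
  have h := ((hA L ν).neg.exp.div_const x).mul hP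
  simp only [id_eq] at h
  erw [h.deriv]
  simp only [Pi.mul_apply, Pi.neg_apply, Pi.add_apply, Pi.sub_apply, Pi.pow_apply]
  show _ = F11 ν l x
  unfold F11 Aa
  rw [← hL]
  field_simp
  ring

lemma pd12_eq (ν l x : ℝ) (hx : 0 < x) (hl : 0 < l) :
    pd₁₂ weibull ν l x = F12 ν l x := by
  unfold pd₁₂
  have hfe : (fun s => pd₁ weibull ν s x)
      =ᶠ[nhds l] fun s => Real.exp (-(Real.exp (ν * (Real.log x - Real.log s)))) / x
        * (Real.exp (ν * (Real.log x - Real.log s))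
          + ν * (Real.log x - Real.log s) * (Real.exp (ν * (Real.log x - Real.log s))
            - Real.exp (ν * (Real.log x - Real.log s)) ^ 2)) := by
    refine ev_eq_nhds hl fun s hs => ?_
    rw [pd1_eq ν s x hx hs]; simp only [F1, Aa, Lg]
  rw [hfe.deriv_eq]
  have hLs : HasDerivAt (fun s => Real.log x - Real.log s) (-l⁻¹) l :=
    (Real.hasDerivAt_log hl.ne').const_sub (Real.log x)
  have hP := (hAs ν l x hl).add ((hLs.const_mul ν).mul
    ((hAs ν l x hl).sub ((hAs ν l x hl).pow 2)))
  have h := ((hAs ν l x hl).neg.exp.div_const x).mul hP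
  erw [h.deriv]
  simp only [Pi.mul_apply, Pi.neg_apply, Pi.add_apply, Pi.sub_apply, Pi.pow_apply]
  show _ = F12 ν l x
  unfold F12 Aa Lg
  field_simp
  ring

lemma pd22_eq (ν l x : ℝ) (hx : 0 < x) (hl : 0 < l) :
    pd₂₂ weibull ν l x = F22 ν l x := by
  unfold pd₂₂
  have hfe : (fun s => pd₂ weibull ν s x)
      =ᶠ[nhds l] fun s => ν ^ 2 * (s * x)⁻¹
        * (Real.exp (ν * (Real.log x - Real.log s)) ^ 2
          - Real.exp (ν * (Real.log x - Real.log s)))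
        * Real.exp (-(Real.exp (ν * (Real.log x - Real.log s)))) := by
    refine ev_eq_nhds hl fun s hs => ?_
    rw [pd2_eq ν s x hx hs]; simp only [F2, Aa, Lg]; rw [div_eq_mul_inv]
  rw [hfe.deriv_eq]
  have hsx : HasDerivAt (fun s : ℝ => (s * x)⁻¹) (-x / (l * x) ^ 2) l := by
    simpa [Pi.inv_def] using ((hasDerivAt_id l).mul_const x).inv (by positivity)
  have h := (((hsx.const_mul (ν ^ 2)).mul
    (((hAs ν l x hl).pow 2).sub (hAs ν l x hl))).mul ((hAs ν l x hl).neg.exp))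
  erw [h.deriv]
  simp only [Pi.mul_apply, Pi.neg_apply, Pi.add_apply, Pi.sub_apply, Pi.pow_apply]
  show _ = F22 ν l x
  unfold F22 Aa Lg
  field_simp
  ring

/-- Coefficient table of the monomials `A^(a+1) * L^b` in the per-point combination. -/
def Cf (ν l α β₁ β₂ γ₁₁ γ₁₂ γ₂₂ : ℝ) : ℕ → ℕ → ℝ := fun a b =>
  match a, b with
  | 0, 0 => α * ν + β₁ - β₂ * ν ^ 2 / l - 2 * γ₁₂ * ν / l + γ₂₂ * ν ^ 2 / l ^ 2 * (1 + ν)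
  | 1, 0 => β₂ * ν ^ 2 / l + 2 * γ₁₂ * ν / l - γ₂₂ * ν ^ 2 / l ^ 2 * (1 + 3 * ν)
  | 2, 0 => γ₂₂ * ν ^ 3 / l ^ 2
  | 0, 1 => β₁ * ν + 2 * γ₁₁ - γ₁₂ * ν ^ 2 / l
  | 1, 1 => -(β₁ * ν) - 2 * γ₁₁ + 3 * γ₁₂ * ν ^ 2 / l
  | 2, 1 => -(γ₁₂ * ν ^ 2) / l
  | 0, 2 => γ₁₁ * ν
  | 1, 2 => -(3 * γ₁₁ * ν)
  | 2, 2 => γ₁₁ * ν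
  | _, _ => 0

lemma comb_eq (ν l x α β₁ β₂ γ₁₁ γ₁₂ γ₂₂ : ℝ) (hx : 0 < x) (hl : 0 < l) :
    α * weibull ν l x + β₁ * pd₁ weibull ν l x + β₂ * pd₂ weibull ν l x
      + γ₁₁ * pd₁₁ weibull ν l x + γ₁₂ * pd₁₂ weibull ν l x + γ₂₂ * pd₂₂ weibull ν l x
    = Real.exp (-(Aa ν l x)) * (∑ a ∈ Finset.range 3, ∑ b ∈ Finset.range 3,
        Cf ν l α β₁ β₂ γ₁₁ γ₁₂ γ₂₂ a b * Aa ν l x ^ (a + 1) * Lg l x ^ b) * x⁻¹ := by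
  rw [weibull_eq ν l x hx hl, pd1_eq ν l x hx hl, pd2_eq ν l x hx hl,
    pd11_eq ν l x hx hl, pd12_eq ν l x hx hl, pd22_eq ν l x hx hl]
  unfold F1 F2 F11 F12 F22
  simp only [Finset.sum_range_succ, Finset.sum_range_zero, Cf]
  field_simp
  ring

lemma eq_zero_of_ae_zero {g : ℝ → ℝ} (hg : ContinuousOn g (Set.Ioi 0))
    (h : ∀ᵐ x ∂(volume.restrict (Set.Ioi (0:ℝ))), g x = 0) :
    ∀ x ∈ Set.Ioi (0:ℝ), g x = 0 := by
  intro x hx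
  by_contra hgx
  have hca : ContinuousAt g x := hg.continuousAt (isOpen_Ioi.mem_nhds hx)
  have hev : ∀ᶠ y in nhds x, g y ≠ 0 := hca.eventually_ne hgx
  obtain ⟨ε, hε, hball⟩ := Metric.eventually_nhds_iff.mp hev
  have hx0 : (0:ℝ) < x := hx
  set ε' : ℝ := min ε x with hε'
  have hε'0 : 0 < ε' := lt_min hε hx0
  have hsub1 : Metric.ball x ε' ⊆ {y | g y ≠ 0} := fun y hy =>
    hball (lt_of_lt_of_le (Metric.mem_ball.mp hy) (min_le_left _ _))
  have hsub2 : Metric.ball x ε' ⊆ Set.Ioi (0:ℝ) := by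
    intro y hy
    have := abs_lt.mp (Metric.mem_ball.mp hy)
    have h2 : x - y < ε' := by
      have : |y - x| < ε' := Metric.mem_ball.mp hy
      have := abs_lt.mp this
      linarith [this.1]
    have : ε' ≤ x := min_le_right _ _
    simp only [Set.mem_Ioi]
    linarith
  have hnull : volume.restrict (Set.Ioi (0:ℝ)) {y | g y ≠ 0} = 0 := by
    have := h
    rw [MeasureTheory.ae_iff] at this
    exact this
  have hle : volume.restrict (Set.Ioi (0:ℝ)) (Metric.ball x ε')
      ≤ volume.restrict (Set.Ioi (0:ℝ)) {y | g y ≠ 0} := measure_mono hsub1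
  have hball_meas : volume.restrict (Set.Ioi (0:ℝ)) (Metric.ball x ε')
      = volume (Metric.ball x ε') := by
    rw [Measure.restrict_apply measurableSet_ball,
      Set.inter_eq_self_of_subset_left hsub2]
  have hpos : 0 < volume (Metric.ball x ε') := by
    rw [Real.volume_ball]
    simp [ENNReal.ofReal_pos]
    linarith
  rw [hball_meas, hnull] at hle
  exact absurd (le_antisymm hle zero_le) (ne_of_gt hpos)

lemma cont_term (ν l : ℝ) (c : ℕ → ℕ → ℝ) :
    ContinuousOn (fun x => Real.exp (-(Aa ν l x)) * (∑ a ∈ Finset.range 3,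
      ∑ b ∈ Finset.range 3, c a b * Aa ν l x ^ (a + 1) * Lg l x ^ b) * x⁻¹)
      (Set.Ioi (0:ℝ)) := by
  have hlog : ContinuousOn Real.log (Set.Ioi (0:ℝ)) :=
    Real.continuousOn_log.mono fun x hx => by
      simp only [Set.mem_compl_iff, Set.mem_singleton_iff]
      exact ne_of_gt hx
  have hLg : ContinuousOn (fun x => Lg l x) (Set.Ioi (0:ℝ)) := by
    unfold Lg; exact hlog.sub continuousOn_const
  have hAa : ContinuousOn (fun x => Aa ν l x) (Set.Ioi (0:ℝ)) := by
    unfold Aa; exact (continuousOn_const.mul hLg).rexp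
  have hinv : ContinuousOn (fun x : ℝ => x⁻¹) (Set.Ioi (0:ℝ)) :=
    continuousOn_inv₀.mono fun x hx => by
      simp only [Set.mem_compl_iff, Set.mem_singleton_iff]
      exact ne_of_gt hx
  refine ((hAa.neg.rexp.mul ?_).mul hinv)
  refine continuousOn_finset_sum _ fun a _ => continuousOn_finset_sum _ fun b _ => ?_
  exact (continuousOn_const.mul (hAa.pow _)).mul (hLg.pow _)

lemma tendsto_pow_shift_mul_exp_neg (b : ℕ) (m c : ℝ) (hc : c < 0) :
    Tendsto (fun y => (y - m) ^ b * Real.exp (c * (y - m))) atTop (nhds 0) := by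
  have hshift : Tendsto (fun y : ℝ => y - m) atTop atTop :=
    tendsto_atTop_add_const_right atTop (-m) tendsto_id
  have hbase : Tendsto (fun z : ℝ => z ^ b * Real.exp (c * z)) atTop (nhds 0) := by
    have h1 : Tendsto (fun z : ℝ => (-c) * z) atTop atTop :=
      tendsto_id.const_mul_atTop (by linarith)
    have h2 := (tendsto_pow_mul_exp_neg_atTop_nhds_zero b).comp h1
    have h3 := h2.const_mul ((-c) ^ b)⁻¹
    rw [mul_zero] at h3
    refine h3.congr' ?_
    filter_upwards [eventually_gt_atTop (0:ℝ)] with z hz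
    simp only [Function.comp_apply]
    rw [mul_pow]
    have h5 : Real.exp (-(-c * z)) = Real.exp (c * z) := by ring_nf
    rw [h5]
    have hne : ((-c:ℝ)) ^ b ≠ 0 := pow_ne_zero _ (by linarith)
    field_simp
  exact hbase.comp hshift

lemma ev_pow_le_exp (b : ℕ) (m : ℝ) :
    ∀ᶠ y in atTop, |y - m| ^ b ≤ Real.exp (y - m) := by
  have h := tendsto_pow_shift_mul_exp_neg b m (-1) (by norm_num)
  have h1 : ∀ᶠ y in atTop, (y - m) ^ b * Real.exp (-1 * (y - m)) < 1 :=
    h.eventually_lt_const one_pos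
  filter_upwards [h1, eventually_ge_atTop m] with y hy hym
  have habs : |y - m| = y - m := abs_of_nonneg (by linarith)
  rw [habs]
  have hep : 0 < Real.exp (-1 * (y - m)) := Real.exp_pos _
  have hle := le_of_lt hy
  have he : Real.exp (-1 * (y - m)) * Real.exp (y - m) = 1 := by
    rw [← Real.exp_add]; norm_num
  calc (y - m) ^ b = (y - m) ^ b * (Real.exp (-1 * (y - m)) * Real.exp (y - m)) := by
        rw [he, mul_one]
    _ = ((y - m) ^ b * Real.exp (-1 * (y - m))) * Real.exp (y - m) := by ring
    _ ≤ 1 * Real.exp (y - m) := mul_le_mul_of_nonneg_right hle (Real.exp_pos _).le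
    _ = Real.exp (y - m) := one_mul _

lemma tendsto_exp_lin_sub_doubleexp (B K δ q : ℝ) (hδ : 0 < δ) (hq : 0 < q) :
    Tendsto (fun y => Real.exp (B * y + K - δ * Real.exp (q * y))) atTop (nhds 0) := by
  apply Real.tendsto_exp_atBot.comp
  have hdiv : Tendsto (fun y => Real.exp (q * y) / y) atTop atTop := by
    have h1 : Tendsto (fun y : ℝ => q * y) atTop atTop :=
      tendsto_id.const_mul_atTop hq
    have h2 := (tendsto_exp_div_pow_atTop 1).comp h1
    have h3 := h2.const_mul_atTop hq
    refine h3.congr' ?_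
    filter_upwards [eventually_gt_atTop (0:ℝ)] with y hy
    simp only [Function.comp_apply, pow_one]
    field_simp
  set R : ℝ := |B| + |K| + 2 with hR
  have hev : ∀ᶠ y in atTop, B * y + K - δ * Real.exp (q * y) ≤ -y := by
    filter_upwards [eventually_ge_atTop (1:ℝ),
      hdiv.eventually_ge_atTop (R / δ)] with y hy1 hy2
    have hy0 : (0:ℝ) < y := by linarith
    have h5 : R ≤ δ * (Real.exp (q * y) / y) := by
      calc R = δ * (R / δ) := by field_simp
        _ ≤ δ * (Real.exp (q * y) / y) := mul_le_mul_of_nonneg_left hy2 hδ.le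
    have h4 : R * y ≤ δ * Real.exp (q * y) := by
      calc R * y ≤ δ * (Real.exp (q * y) / y) * y := mul_le_mul_of_nonneg_right h5 hy0.le
        _ = δ * Real.exp (q * y) := by field_simp
    have hB : B * y ≤ |B| * y := by
      apply mul_le_mul_of_nonneg_right (le_abs_self B) (by linarith)
    have hK : K ≤ |K| * y := by
      calc K ≤ |K| := le_abs_self K
        _ = |K| * 1 := (mul_one _).symm
        _ ≤ |K| * y := by apply mul_le_mul_of_nonneg_left hy1 (abs_nonneg K)
    rw [hR] at h4
    nlinarith [abs_nonneg B, abs_nonneg K]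
  refine tendsto_atBot_mono' atTop hev ?_
  exact tendsto_neg_atTop_atBot

lemma quad_tendsto_zero {c₀ c₁ c₂ : ℝ}
    (h : Tendsto (fun z : ℝ => c₀ + c₁ * z + c₂ * z ^ 2) atTop (nhds 0)) :
    c₀ = 0 ∧ c₁ = 0 ∧ c₂ = 0 := by
  have hz2 : Tendsto (fun z : ℝ => z ^ 2) atTop atTop := tendsto_pow_atTop two_ne_zero
  have hz1 : Tendsto (fun z : ℝ => z) atTop atTop := tendsto_id
  have hc2 : c₂ = 0 := by
    have hd2a : Tendsto (fun z => (c₀ + c₁ * z + c₂ * z ^ 2) / z ^ 2) atTop (nhds 0) :=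
      h.div_atTop hz2
    have hd2b : Tendsto (fun z => (c₀ + c₁ * z + c₂ * z ^ 2) / z ^ 2) atTop (nhds c₂) := by
      have l1 : Tendsto (fun z : ℝ => c₀ / z ^ 2 + c₁ / z + c₂) atTop (nhds c₂) := by
        have t1 : Tendsto (fun z : ℝ => c₀ / z ^ 2) atTop (nhds 0) :=
          tendsto_const_nhds.div_atTop hz2
        have t2 : Tendsto (fun z : ℝ => c₁ / z) atTop (nhds 0) :=
          tendsto_const_nhds.div_atTop hz1
        have := (t1.add t2).add (tendsto_const_nhds (x := c₂))
        simpa using this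
      refine l1.congr' ?_
      filter_upwards [eventually_gt_atTop (0:ℝ)] with z hz
      field_simp
    exact (tendsto_nhds_unique hd2b hd2a)
  subst hc2
  have hc1 : c₁ = 0 := by
    have hd1a : Tendsto (fun z => (c₀ + c₁ * z + 0 * z ^ 2) / z) atTop (nhds 0) :=
      h.div_atTop hz1
    have hd1b : Tendsto (fun z => (c₀ + c₁ * z + 0 * z ^ 2) / z) atTop (nhds c₁) := by
      have l1 : Tendsto (fun z : ℝ => c₀ / z + c₁) atTop (nhds c₁) := by
        have t1 : Tendsto (fun z : ℝ => c₀ / z) atTop (nhds 0) :=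
          tendsto_const_nhds.div_atTop hz1
        have := t1.add (tendsto_const_nhds (x := c₁))
        simpa using this
      refine l1.congr' ?_
      filter_upwards [eventually_gt_atTop (0:ℝ)] with z hz
      field_simp
      ring
    exact (tendsto_nhds_unique hd1b hd1a)
  subst hc1
  refine ⟨?_, rfl, rfl⟩
  have : Tendsto (fun _ : ℝ => c₀) atTop (nhds 0) := by
    refine h.congr fun z => by ring
  exact tendsto_nhds_unique tendsto_const_nhds this

lemma quad_shift_tendsto_zero {c₀ c₁ c₂ m : ℝ}
    (h : Tendsto (fun y : ℝ => c₀ + c₁ * (y - m) + c₂ * (y - m) ^ 2) atTop (nhds 0)) :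
    c₀ = 0 ∧ c₁ = 0 ∧ c₂ = 0 := by
  apply quad_tendsto_zero (c₀ := c₀) (c₁ := c₁) (c₂ := c₂)
  have hshift : Tendsto (fun z : ℝ => z + m) atTop atTop :=
    tendsto_atTop_add_const_right atTop m tendsto_id
  have := h.comp hshift
  refine this.congr fun z => ?_
  simp [Function.comp]

lemma monomial_tendsto_zero (M νi mi C δ q : ℝ) (a b : ℕ) (f g : ℝ → ℝ)
    (hδ : 0 < δ) (hq : 0 < q)
    (hdom : ∀ᶠ y in atTop, f y - g y ≤ -(δ * Real.exp (q * y))) :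
    Tendsto (fun y => Real.exp (M * y) * Real.exp (f y) * (Real.exp (-(g y))
      * (C * Real.exp (νi * (y - mi)) ^ (a + 1) * (y - mi) ^ b))) atTop (nhds 0) := by
  set B : ℝ := M + ((a : ℝ) + 1) * νi + 1 with hB
  set K : ℝ := -(((a : ℝ) + 1) * νi * mi) - mi with hK
  have hG : Tendsto (fun y => |C| * Real.exp (B * y + K - δ * Real.exp (q * y)))
      atTop (nhds 0) := by
    have := (tendsto_exp_lin_sub_doubleexp B K δ q hδ hq).const_mul |C|
    simpa using this
  refine squeeze_zero_norm' ?_ hG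
  filter_upwards [hdom, ev_pow_le_exp b mi] with y h1 h2
  have hexp_pow : Real.exp (νi * (y - mi)) ^ (a + 1)
      = Real.exp (((a : ℝ) + 1) * (νi * (y - mi))) := by
    rw [← Real.exp_nat_mul]
    push_cast
    ring_nf
  have habs : ‖Real.exp (M * y) * Real.exp (f y) * (Real.exp (-(g y))
      * (C * Real.exp (νi * (y - mi)) ^ (a + 1) * (y - mi) ^ b))‖
      = Real.exp (M * y) * Real.exp (f y) * Real.exp (-(g y))
        * Real.exp (((a : ℝ) + 1) * (νi * (y - mi))) * |y - mi| ^ b * |C| := by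
    rw [Real.norm_eq_abs]
    rw [hexp_pow]
    rw [abs_mul, abs_mul, abs_mul, abs_mul, abs_mul, abs_pow]
    rw [Real.abs_exp, Real.abs_exp, Real.abs_exp, Real.abs_exp]
    ring
  rw [habs]
  have e1 : Real.exp (M * y + (f y - g y) + ((a : ℝ) + 1) * (νi * (y - mi)))
      ≤ Real.exp (M * y + (-(δ * Real.exp (q * y))) + ((a : ℝ) + 1) * (νi * (y - mi))) := by
    apply Real.exp_le_exp.mpr; linarith
  have hpb : (0:ℝ) ≤ |y - mi| ^ b := by positivity
  have e2 : Real.exp (M * y + (-(δ * Real.exp (q * y))) + ((a : ℝ) + 1) * (νi * (y - mi)))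
      * Real.exp (y - mi) = Real.exp (B * y + K - δ * Real.exp (q * y)) := by
    rw [← Real.exp_add]; congr 1; rw [hB, hK]; ring
  calc Real.exp (M * y) * Real.exp (f y) * Real.exp (-(g y))
        * Real.exp (((a : ℝ) + 1) * (νi * (y - mi))) * |y - mi| ^ b * |C|
      = Real.exp (M * y + (f y - g y) + ((a : ℝ) + 1) * (νi * (y - mi)))
        * |y - mi| ^ b * |C| := by
        rw [← Real.exp_add, ← Real.exp_add]
        have harg : M * y + f y + -(g y) + ((a : ℝ) + 1) * (νi * (y - mi))
            = M * y + (f y - g y) + ((a : ℝ) + 1) * (νi * (y - mi)) := by ring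
        rw [← Real.exp_add, harg]
    _ ≤ Real.exp (M * y + (-(δ * Real.exp (q * y))) + ((a : ℝ) + 1) * (νi * (y - mi)))
        * Real.exp (y - mi) * |C| :=
        mul_le_mul_of_nonneg_right (mul_le_mul e1 h2 hpb (Real.exp_pos _).le) (abs_nonneg C)
    _ = |C| * Real.exp (B * y + K - δ * Real.exp (q * y)) := by rw [e2]; ring

lemma decay_helper (ν m : ℝ) (hν : 0 < ν) (d : ℝ) (b n : ℕ) (hn : 0 < n) :
    Tendsto (fun y => d * (y - m) ^ b / Real.exp (ν * (y - m)) ^ n) atTop (nhds 0) := by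
  have hc : (-((n : ℝ) * ν)) < 0 := by
    have : (0:ℝ) < (n:ℝ) := by exact_mod_cast hn
    nlinarith
  have h := (tendsto_pow_shift_mul_exp_neg b m _ hc).const_mul d
  rw [mul_zero] at h
  refine h.congr fun y => ?_
  have h1 : Real.exp (ν * (y - m)) ^ n = Real.exp ((n : ℝ) * (ν * (y - m))) :=
    (Real.exp_nat_mul _ n).symm
  have h2 : Real.exp (-((n : ℝ) * ν) * (y - m)) = (Real.exp ((n : ℝ) * (ν * (y - m))))⁻¹ := by
    rw [← Real.exp_neg]; congr 1; ring
  rw [h1, h2, div_eq_mul_inv]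
  ring

lemma extract3 (ν m : ℝ) (hν : 0 < ν) (e : ℕ → ℕ → ℝ)
    (H : ∀ M : ℝ, Tendsto (fun y => Real.exp (M * y) * ∑ a ∈ Finset.range 3,
      ∑ b ∈ Finset.range 3, e a b * Real.exp (ν * (y - m)) ^ (a + 1) * (y - m) ^ b)
      atTop (nhds 0)) :
    ∀ a < 3, ∀ b < 3, e a b = 0 := by
  -- stage 3 : coefficients of A^3
  have h2' : e 2 0 = 0 ∧ e 2 1 = 0 ∧ e 2 2 = 0 := by
    have Hs := (H (-(3 * ν))).const_mul (Real.exp (3 * ν * m))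
    rw [mul_zero] at Hs
    have hdec := ((((((decay_helper ν m hν (e 0 0) 0 2 (by norm_num)).add
      (decay_helper ν m hν (e 0 1) 1 2 (by norm_num))).add
      (decay_helper ν m hν (e 0 2) 2 2 (by norm_num))).add
      (decay_helper ν m hν (e 1 0) 0 1 (by norm_num))).add
      (decay_helper ν m hν (e 1 1) 1 1 (by norm_num))).add
      (decay_helper ν m hν (e 1 2) 2 1 (by norm_num)))
    simp only [add_zero] at hdec
    have hq := Hs.sub hdec
    rw [sub_zero] at hq
    refine quad_shift_tendsto_zero (m := m) (hq.congr fun y => ?_)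
    simp only [Finset.sum_range_succ, Finset.sum_range_zero]
    have e1 : Real.exp (ν * (y - m)) = Real.exp (ν * y) / Real.exp (ν * m) := by
      rw [← Real.exp_sub]; congr 1; ring
    have e2 : Real.exp (-(3 * ν) * y) = (Real.exp (ν * y) ^ 3)⁻¹ := by
      rw [show Real.exp (ν * y) ^ 3 = Real.exp ((3:ℕ) * (ν * y)) from
        (Real.exp_nat_mul _ 3).symm, ← Real.exp_neg]
      congr 1; push_cast; ring
    have e3 : Real.exp (3 * ν * m) = Real.exp (ν * m) ^ 3 := by
      rw [show Real.exp (ν * m) ^ 3 = Real.exp ((3:ℕ) * (ν * m)) from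
        (Real.exp_nat_mul _ 3).symm]
      congr 1; push_cast; ring
    rw [e1, e2, e3]
    have hu : Real.exp (ν * y) ≠ 0 := (Real.exp_pos _).ne'
    have hv : Real.exp (ν * m) ≠ 0 := (Real.exp_pos _).ne'
    field_simp
    ring_nf
    field_simp
    ring
  obtain ⟨h20, h21, h22⟩ := h2'
  -- stage 2 : coefficients of A^2
  have h1' : e 1 0 = 0 ∧ e 1 1 = 0 ∧ e 1 2 = 0 := by
    have Hs := (H (-(2 * ν))).const_mul (Real.exp (2 * ν * m))
    rw [mul_zero] at Hs
    have hdec := (((decay_helper ν m hν (e 0 0) 0 1 (by norm_num)).add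
      (decay_helper ν m hν (e 0 1) 1 1 (by norm_num))).add
      (decay_helper ν m hν (e 0 2) 2 1 (by norm_num)))
    simp only [add_zero] at hdec
    have hq := Hs.sub hdec
    rw [sub_zero] at hq
    refine quad_shift_tendsto_zero (m := m) (hq.congr fun y => ?_)
    simp only [Finset.sum_range_succ, Finset.sum_range_zero, h20, h21, h22,
      zero_mul, mul_zero, add_zero, zero_add]
    have e1 : Real.exp (ν * (y - m)) = Real.exp (ν * y) / Real.exp (ν * m) := by
      rw [← Real.exp_sub]; congr 1; ring
    have e2 : Real.exp (-(2 * ν) * y) = (Real.exp (ν * y) ^ 2)⁻¹ := by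
      rw [show Real.exp (ν * y) ^ 2 = Real.exp ((2:ℕ) * (ν * y)) from
        (Real.exp_nat_mul _ 2).symm, ← Real.exp_neg]
      congr 1; push_cast; ring
    have e3 : Real.exp (2 * ν * m) = Real.exp (ν * m) ^ 2 := by
      rw [show Real.exp (ν * m) ^ 2 = Real.exp ((2:ℕ) * (ν * m)) from
        (Real.exp_nat_mul _ 2).symm]
      congr 1; push_cast; ring
    rw [e1, e2, e3]
    have hu : Real.exp (ν * y) ≠ 0 := (Real.exp_pos _).ne'
    have hv : Real.exp (ν * m) ≠ 0 := (Real.exp_pos _).ne'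
    field_simp
    ring_nf
    field_simp
  obtain ⟨h10, h11, h12⟩ := h1'
  -- stage 1 : coefficients of A^1
  have h0' : e 0 0 = 0 ∧ e 0 1 = 0 ∧ e 0 2 = 0 := by
    have Hs := (H (-(1 * ν))).const_mul (Real.exp (1 * ν * m))
    rw [mul_zero] at Hs
    refine quad_shift_tendsto_zero (m := m) (Hs.congr fun y => ?_)
    simp only [Finset.sum_range_succ, Finset.sum_range_zero, h20, h21, h22,
      h10, h11, h12, zero_mul, mul_zero, add_zero, zero_add]
    have e1 : Real.exp (ν * (y - m)) = Real.exp (ν * y) / Real.exp (ν * m) := by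
      rw [← Real.exp_sub]; congr 1; ring
    have e2 : Real.exp (-(1 * ν) * y) = (Real.exp (ν * y))⁻¹ := by
      rw [← Real.exp_neg]; congr 1; ring
    have e3 : Real.exp (1 * ν * m) = Real.exp (ν * m) := by congr 1; ring
    rw [e1, e2, e3]
    have hu : Real.exp (ν * y) ≠ 0 := (Real.exp_pos _).ne'
    have hv : Real.exp (ν * m) ≠ 0 := (Real.exp_pos _).ne'
    field_simp
  obtain ⟨h00, h01, h02⟩ := h0'
  intro a ha b hb
  interval_cases a <;> interval_cases b <;> assumption

lemma key_induction (k : ℕ) (ν m : Fin k → ℝ) (hν : ∀ j, 0 < ν j)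
    (hdist : ∀ i j, ν i = ν j → m i = m j → i = j)
    (D : Fin k → ℕ → ℕ → ℝ) :
    ∀ s : Finset (Fin k),
      (∀ y : ℝ, ∑ j ∈ s, Real.exp (-(Real.exp (ν j * (y - m j)))) *
        (∑ a ∈ Finset.range 3, ∑ b ∈ Finset.range 3,
          D j a b * Real.exp (ν j * (y - m j)) ^ (a + 1) * (y - m j) ^ b) = 0) →
      ∀ j ∈ s, ∀ a < 3, ∀ b < 3, D j a b = 0 := by
  intro s
  induction s using Finset.strongInduction with
  | _ s ih =>
    intro hsum j hj
    have hsne : s.Nonempty := ⟨j, hj⟩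
    obtain ⟨j₀, hj₀s, hj₀min⟩ := s.exists_min_image ν hsne
    have hs'ne : (s.filter (fun i => ν i = ν j₀)).Nonempty :=
      ⟨j₀, Finset.mem_filter.mpr ⟨hj₀s, rfl⟩⟩
    obtain ⟨js, hjs', hjsmax⟩ := (s.filter (fun i => ν i = ν j₀)).exists_max_image m hs'ne
    have hjss : js ∈ s := (Finset.mem_filter.mp hjs').1
    have hνjs : ν js = ν j₀ := (Finset.mem_filter.mp hjs').2
    -- dominance of js over every other element of s
    have hdom : ∀ i ∈ s, i ≠ js → ∃ δ q : ℝ, 0 < δ ∧ 0 < q ∧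
        ∀ᶠ y in atTop, Real.exp (ν js * (y - m js)) - Real.exp (ν i * (y - m i))
          ≤ -(δ * Real.exp (q * y)) := by
      intro i hi hij
      by_cases hcase : ν i = ν js
      · -- same shape parameter, different scale
        have hi' : i ∈ s.filter (fun i' => ν i' = ν j₀) :=
          Finset.mem_filter.mpr ⟨hi, hcase.trans hνjs⟩
        have hmle : m i ≤ m js := hjsmax i hi'
        have hmne : m i ≠ m js := fun h => hij (hdist i js hcase h)
        have hmlt : m i < m js := lt_of_le_of_ne hmle hmne
        refine ⟨Real.exp (-(ν i * m i)) - Real.exp (-(ν i * m js)), ν i,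
          by
            have := Real.exp_lt_exp.mpr (show -(ν i * m js) < -(ν i * m i) by
              have := hν i; nlinarith)
            linarith,
          hν i, ?_⟩
        filter_upwards with y
        have h1 : Real.exp (ν js * (y - m js))
            = Real.exp (-(ν i * m js)) * Real.exp (ν i * y) := by
          rw [← Real.exp_add, hcase]; congr 1; ring
        have h2 : Real.exp (ν i * (y - m i))
            = Real.exp (-(ν i * m i)) * Real.exp (ν i * y) := by
          rw [← Real.exp_add]; congr 1; ring
        rw [h1, h2]
        nlinarith [Real.exp_pos (ν i * y)]
      · -- strictly larger shape parameter
        have hlt : ν js < ν i :=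
          lt_of_le_of_ne (hνjs ▸ hj₀min i hi) (Ne.symm hcase)
        set δ : ℝ := Real.exp (-(ν i * m i)) / 2 with hδ
        refine ⟨δ, ν i, by positivity, hν i, ?_⟩
        have hlin : Tendsto (fun y => (ν js - ν i) * y - ν js * m js) atTop atBot := by
          apply tendsto_atBot_add_const_right
          exact Tendsto.const_mul_atTop_of_neg (by linarith) tendsto_id
        have hev : ∀ᶠ y in atTop,
            Real.exp ((ν js - ν i) * y - ν js * m js) < δ := by
          have := (Real.tendsto_exp_atBot.comp hlin).eventually_lt_const
            (show (0:ℝ) < δ by positivity)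
          simpa [Function.comp] using this
        filter_upwards [hev] with y hy
        have h1 : Real.exp (ν js * (y - m js))
            = Real.exp ((ν js - ν i) * y - ν js * m js) * Real.exp (ν i * y) := by
          rw [← Real.exp_add]; congr 1; ring
        have h2 : Real.exp (ν i * (y - m i))
            = (2 * δ) * Real.exp (ν i * y) := by
          rw [hδ]
          rw [show (2:ℝ) * (Real.exp (-(ν i * m i)) / 2) = Real.exp (-(ν i * m i)) from by
            ring]
          rw [← Real.exp_add]; congr 1; ring
        rw [h1, h2]
        nlinarith [Real.exp_pos (ν i * y), hy, Real.exp_pos ((ν js - ν i) * y - ν js * m js)]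
    -- the leading coefficients vanish
    have hzero : ∀ a < 3, ∀ b < 3, D js a b = 0 := by
      refine extract3 (ν js) (m js) (hν js) (D js) ?_
      intro M
      have hterm : ∀ i ∈ s.erase js, Tendsto (fun y =>
          Real.exp (M * y) * Real.exp (Real.exp (ν js * (y - m js)))
            * (Real.exp (-(Real.exp (ν i * (y - m i))))
              * (∑ a ∈ Finset.range 3, ∑ b ∈ Finset.range 3,
                D i a b * Real.exp (ν i * (y - m i)) ^ (a + 1) * (y - m i) ^ b)))
          atTop (nhds 0) := by
        intro i hi
        obtain ⟨δ, q, hδ, hq, hdomi⟩ :=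
          hdom i (Finset.mem_of_mem_erase hi) (Finset.ne_of_mem_erase hi)
        have hlim := tendsto_finset_sum (Finset.range 3) fun a (_ : a ∈ Finset.range 3) =>
          tendsto_finset_sum (Finset.range 3) fun b (_ : b ∈ Finset.range 3) =>
            monomial_tendsto_zero M (ν i) (m i) (D i a b) δ q a b
              (fun y => Real.exp (ν js * (y - m js)))
              (fun y => Real.exp (ν i * (y - m i))) hδ hq hdomi
        simp only [Finset.sum_const_zero] at hlim
        refine hlim.congr fun y => ?_
        simp only [Finset.mul_sum]
      have hlim := tendsto_finset_sum (s.erase js) hterm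
      simp only [Finset.sum_const_zero] at hlim
      have hlim2 := hlim.neg
      rw [neg_zero] at hlim2
      refine hlim2.congr fun y => ?_
      have h0 := hsum y
      rw [← Finset.add_sum_erase _ _ hjss] at h0
      have hT' : (∑ i ∈ s.erase js, Real.exp (-(Real.exp (ν i * (y - m i)))) *
            (∑ a ∈ Finset.range 3, ∑ b ∈ Finset.range 3,
              D i a b * Real.exp (ν i * (y - m i)) ^ (a + 1) * (y - m i) ^ b))
          = -(Real.exp (-(Real.exp (ν js * (y - m js)))) *
          (∑ a ∈ Finset.range 3, ∑ b ∈ Finset.range 3,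
            D js a b * Real.exp (ν js * (y - m js)) ^ (a + 1) * (y - m js) ^ b)) := by
        linarith
      have hcancel : Real.exp (Real.exp (ν js * (y - m js)))
          * Real.exp (-(Real.exp (ν js * (y - m js)))) = 1 := by
        rw [← Real.exp_add]; simp
      have hfact : (∑ i ∈ s.erase js, Real.exp (M * y)
            * Real.exp (Real.exp (ν js * (y - m js)))
            * (Real.exp (-(Real.exp (ν i * (y - m i))))
              * (∑ a ∈ Finset.range 3, ∑ b ∈ Finset.range 3,
                D i a b * Real.exp (ν i * (y - m i)) ^ (a + 1) * (y - m i) ^ b)))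
          = Real.exp (M * y) * Real.exp (Real.exp (ν js * (y - m js)))
            * (∑ i ∈ s.erase js, Real.exp (-(Real.exp (ν i * (y - m i))))
              * (∑ a ∈ Finset.range 3, ∑ b ∈ Finset.range 3,
                D i a b * Real.exp (ν i * (y - m i)) ^ (a + 1) * (y - m i) ^ b)) := by
        rw [Finset.mul_sum]
      rw [hfact, hT']
      linear_combination (Real.exp (M * y) * (∑ a ∈ Finset.range 3, ∑ b ∈ Finset.range 3,
        D js a b * Real.exp (ν js * (y - m js)) ^ (a + 1) * (y - m js) ^ b)) * hcancel
    -- conclude by removing js and applying the induction hypothesis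
    have hQjs : ∀ y : ℝ, (∑ a ∈ Finset.range 3, ∑ b ∈ Finset.range 3,
        D js a b * Real.exp (ν js * (y - m js)) ^ (a + 1) * (y - m js) ^ b) = 0 := by
      intro y
      refine Finset.sum_eq_zero fun a ha => Finset.sum_eq_zero fun b hb => ?_
      rw [hzero a (Finset.mem_range.mp ha) b (Finset.mem_range.mp hb)]
      ring
    by_cases hjjs : j = js
    · subst hjjs; exact hzero
    · have hsum' : ∀ y : ℝ, ∑ i ∈ s.erase js,
          Real.exp (-(Real.exp (ν i * (y - m i)))) *
          (∑ a ∈ Finset.range 3, ∑ b ∈ Finset.range 3,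
            D i a b * Real.exp (ν i * (y - m i)) ^ (a + 1) * (y - m i) ^ b) = 0 := by
        intro y
        have h0 := hsum y
        rw [← Finset.add_sum_erase _ _ hjss, hQjs y] at h0
        simpa using h0
      exact ih (s.erase js) (Finset.erase_ssubset hjss) hsum' j
        (Finset.mem_erase.mpr ⟨hjjs, hj⟩)


/-- **Theorem 3.3(c)**: the Weibull family (shape and scale both varying) is
identifiable in the second order: no nonzero linear combination of the densities
and their first- and second-order partial derivatives in the parameters, at
finitely many distinct parameter points, vanishes for almost every `x > 0`. -/
theorem weibull_second_order_identifiable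
    (k : ℕ) (hk : 1 ≤ k) (φ : Fin k → ℝ × ℝ)
    (hφ : ∀ j, 0 < (φ j).1 ∧ 0 < (φ j).2) (hinj : Function.Injective φ)
    (α β₁ β₂ γ₁₁ γ₁₂ γ₂₂ : Fin k → ℝ)
    (hae : ∀ᵐ x ∂(volume.restrict (Set.Ioi (0 : ℝ))),
      ∑ j, (α j * weibull (φ j).1 (φ j).2 x
        + β₁ j * pd₁ weibull (φ j).1 (φ j).2 x
        + β₂ j * pd₂ weibull (φ j).1 (φ j).2 x
        + γ₁₁ j * pd₁₁ weibull (φ j).1 (φ j).2 x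
        + γ₁₂ j * pd₁₂ weibull (φ j).1 (φ j).2 x
        + γ₂₂ j * pd₂₂ weibull (φ j).1 (φ j).2 x) = 0) :
    ∀ j, α j = 0 ∧ β₁ j = 0 ∧ β₂ j = 0 ∧ γ₁₁ j = 0 ∧ γ₁₂ j = 0 ∧ γ₂₂ j = 0 := by
  set νf : Fin k → ℝ := fun j => (φ j).1 with hνf
  set lf : Fin k → ℝ := fun j => (φ j).2 with hlf
  set mf : Fin k → ℝ := fun j => Real.log (lf j) with hmf
  set Dj : Fin k → ℕ → ℕ → ℝ := fun j =>
    Cf (νf j) (lf j) (α j) (β₁ j) (β₂ j) (γ₁₁ j) (γ₁₂ j) (γ₂₂ j) with hDj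
  set g : ℝ → ℝ := fun x => ∑ j, Real.exp (-(Aa (νf j) (lf j) x)) *
    (∑ a ∈ Finset.range 3, ∑ b ∈ Finset.range 3,
      Dj j a b * Aa (νf j) (lf j) x ^ (a + 1) * Lg (lf j) x ^ b) * x⁻¹ with hg
  have hgcont : ContinuousOn g (Set.Ioi 0) := by
    rw [hg]
    exact continuousOn_finset_sum _ fun j _ => cont_term (νf j) (lf j) (Dj j)
  have hae' : ∀ᵐ x ∂(volume.restrict (Set.Ioi (0 : ℝ))), g x = 0 := by
    filter_upwards [hae, ae_restrict_mem measurableSet_Ioi] with x hx hmem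
    rw [hg]
    have : ∀ j : Fin k, Real.exp (-(Aa (νf j) (lf j) x)) *
        (∑ a ∈ Finset.range 3, ∑ b ∈ Finset.range 3,
          Dj j a b * Aa (νf j) (lf j) x ^ (a + 1) * Lg (lf j) x ^ b) * x⁻¹
        = α j * weibull (νf j) (lf j) x + β₁ j * pd₁ weibull (νf j) (lf j) x
          + β₂ j * pd₂ weibull (νf j) (lf j) x + γ₁₁ j * pd₁₁ weibull (νf j) (lf j) x
          + γ₁₂ j * pd₁₂ weibull (νf j) (lf j) x + γ₂₂ j * pd₂₂ weibull (νf j) (lf j) x :=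
      fun j => (comb_eq (νf j) (lf j) x (α j) (β₁ j) (β₂ j) (γ₁₁ j) (γ₁₂ j) (γ₂₂ j)
        hmem (hφ j).2).symm
    calc (∑ j, Real.exp (-(Aa (νf j) (lf j) x)) *
        (∑ a ∈ Finset.range 3, ∑ b ∈ Finset.range 3,
          Dj j a b * Aa (νf j) (lf j) x ^ (a + 1) * Lg (lf j) x ^ b) * x⁻¹)
        = ∑ j, (α j * weibull (νf j) (lf j) x + β₁ j * pd₁ weibull (νf j) (lf j) x
          + β₂ j * pd₂ weibull (νf j) (lf j) x + γ₁₁ j * pd₁₁ weibull (νf j) (lf j) x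
          + γ₁₂ j * pd₁₂ weibull (νf j) (lf j) x + γ₂₂ j * pd₂₂ weibull (νf j) (lf j) x) :=
        Finset.sum_congr rfl fun j _ => this j
      _ = 0 := hx
  have hg0 := eq_zero_of_ae_zero hgcont hae'
  -- pass to the exponential variable
  have hy : ∀ y : ℝ, ∑ j, Real.exp (-(Real.exp (νf j * (y - mf j)))) *
      (∑ a ∈ Finset.range 3, ∑ b ∈ Finset.range 3,
        Dj j a b * Real.exp (νf j * (y - mf j)) ^ (a + 1) * (y - mf j) ^ b) = 0 := by
    intro y
    have hxy := hg0 (Real.exp y) (Set.mem_Ioi.mpr (Real.exp_pos y))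
    rw [hg] at hxy
    have hsimp : ∀ j : Fin k, Aa (νf j) (lf j) (Real.exp y)
        = Real.exp (νf j * (y - mf j)) ∧ Lg (lf j) (Real.exp y) = y - mf j := by
      intro j
      constructor
      · unfold Aa Lg; rw [Real.log_exp, hmf]
      · unfold Lg; rw [Real.log_exp, hmf]
    have hxy2 : (∑ j, Real.exp (-(Real.exp (νf j * (y - mf j)))) *
        (∑ a ∈ Finset.range 3, ∑ b ∈ Finset.range 3,
          Dj j a b * Real.exp (νf j * (y - mf j)) ^ (a + 1) * (y - mf j) ^ b))
        * (Real.exp y)⁻¹ = 0 := by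
      rw [Finset.sum_mul]
      rw [← hxy]
      refine Finset.sum_congr rfl fun j _ => ?_
      rw [(hsimp j).1, (hsimp j).2]
    rcases mul_eq_zero.mp hxy2 with h | h
    · exact h
    · exact absurd h (inv_ne_zero (Real.exp_ne_zero y))
  have hdist : ∀ i j : Fin k, νf i = νf j → mf i = mf j → i = j := by
    intro i j hn hm
    have hLi : 0 < lf i := (hφ i).2
    have hLj : 0 < lf j := (hφ j).2
    have hm' : Real.log (lf i) = Real.log (lf j) := hm
    have hl : lf i = lf j := by
      rw [← Real.exp_log hLi, ← Real.exp_log hLj, hm']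
    exact hinj (Prod.ext hn hl)
  have hC := key_induction k νf mf (fun j => (hφ j).1) hdist Dj Finset.univ hy
  intro j
  have hCj : ∀ a < 3, ∀ b < 3, Cf (νf j) (lf j) (α j) (β₁ j) (β₂ j)
      (γ₁₁ j) (γ₁₂ j) (γ₂₂ j) a b = 0 := by
    intro a ha b hb
    have := hC j (Finset.mem_univ j) a ha b hb
    rwa [hDj] at this
  have hn : 0 < νf j := (hφ j).1
  have hL : 0 < lf j := (hφ j).2
  have h20 := hCj 2 (by norm_num) 0 (by norm_num)
  have h21 := hCj 2 (by norm_num) 1 (by norm_num)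
  have h02 := hCj 0 (by norm_num) 2 (by norm_num)
  have h01 := hCj 0 (by norm_num) 1 (by norm_num)
  have h10 := hCj 1 (by norm_num) 0 (by norm_num)
  have h00 := hCj 0 (by norm_num) 0 (by norm_num)
  simp only [Cf] at h20 h21 h02 h01 h10 h00
  have hg22 : γ₂₂ j = 0 := by
    have hd : γ₂₂ j * νf j ^ 3 = 0 := by
      rw [div_eq_zero_iff] at h20
      rcases h20 with h | h
      · exact h
      · exact absurd h (pow_ne_zero 2 hL.ne')
    exact (mul_eq_zero.mp hd).resolve_right (pow_ne_zero 3 hn.ne')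
  have hg12 : γ₁₂ j = 0 := by
    rw [div_eq_zero_iff] at h21
    rcases h21 with h | h
    · have h' := neg_eq_zero.mp h
      exact (mul_eq_zero.mp h').resolve_right (pow_ne_zero 2 hn.ne')
    · exact absurd h hL.ne'
  have hg11 : γ₁₁ j = 0 :=
    (mul_eq_zero.mp h02).resolve_right hn.ne'
  have hb1 : β₁ j = 0 := by
    simp only [hg11, hg12, zero_mul, mul_zero, zero_div, add_zero, sub_zero] at h01
    exact (mul_eq_zero.mp h01).resolve_right hn.ne'
  have hb2 : β₂ j = 0 := by
    simp only [hg12, hg22, zero_mul, mul_zero, zero_div, add_zero, sub_zero] at h10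
    have hd : β₂ j * νf j ^ 2 = 0 := by
      rw [div_eq_zero_iff] at h10
      rcases h10 with h | h
      · exact h
      · exact absurd h hL.ne'
    exact (mul_eq_zero.mp hd).resolve_right (pow_ne_zero 2 hn.ne')
  have ha : α j = 0 := by
    simp only [hb1, hb2, hg12, hg22, zero_mul, mul_zero, zero_div, add_zero,
      sub_zero, zero_add] at h00
    exact (mul_eq_zero.mp h00).resolve_right hn.ne'
  exact ⟨ha, hb1, hb2, hg11, hg12, hg22⟩
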